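/- Let G = ⟨τ⟩ have order 2 and R₂ = Z_(2)[G]. Suppose M is a finite Z_(2)[G]-module such that ker(1+τ)/im(1-τ) on M has order 2. Then |M/(1-τ)M|·(1+τ)/2 ∈ Fit_{R₂}(M). -/

import Mathlib

/-- The zeroth Fitting ideal of a module `M` over a commutative ring `A`. -/
def fittingIdeal (A : Type*) [CommRing A] (M : Type*) [AddCommGroup M] [Module A M] :
    Ideal A :=
  ⨆ (n : ℕ) (x : Fin n → M) (_ : Submodule.span A (Set.range x) = ⊤),
    Ideal.span {d : A | ∃ B : Matrix (Fin n) (Fin n) A,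
      (∀ i, ∑ j, B i j • x j = 0) ∧ d = B.det}

/-- The group `G` of order two. -/
abbrev Gtwo := Multiplicative (ZMod 2)

/-- The localization `ℤ_(2)` of `ℤ` at 2, as the subring of `ℚ` generated by
the inverses of odd integers. -/
def Zloc : Subring ℚ := Subring.closure {q : ℚ | ∃ n : ℤ, ¬(2 ∣ n) ∧ q * n = 1}

/-- The group ring `R₂ = ℤ_(2)[G]`. -/
abbrev Rtwo := MonoidAlgebra Zloc Gtwo

/-- The nontrivial element `τ` inside `R₂ = ℤ_(2)[G]`. -/
noncomputable def tau2 : Rtwo := MonoidAlgebra.of Zloc Gtwo (Multiplicative.ofAdd 1)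

open DirectSum

lemma tau2_sq : tau2 * tau2 = 1 := by
  rw [tau2, ← map_mul, ← ofAdd_add]
  show MonoidAlgebra.of Zloc Gtwo (Multiplicative.ofAdd (1+1 : ZMod 2)) = 1
  have : (1 + 1 : ZMod 2) = 0 := by decide
  rw [this, ofAdd_zero, map_one]

lemma one_add_mul_one_sub : (1 + tau2) * (1 - tau2) = 0 := by
  have h := tau2_sq; ring_nf; rw [pow_two, h]; ring

lemma one_sub_sq : (1 - tau2) * (1 - tau2) = 2 * (1 - tau2) := by
  have h := tau2_sq; ring_nf; rw [pow_two, h]; ring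

lemma two_regular (a b : Rtwo) (h : 2 * a = 2 * b) : a = b := by
  rw [two_mul, two_mul] at h
  have hc : (a - b) + (a - b) = 0 := by rw [sub_add_sub_comm, h, sub_self]
  have hz : a - b = 0 := by
    apply MonoidAlgebra.ext
    apply Finsupp.ext
    intro g
    have h2 : (a - b).coeff g + (a - b).coeff g = 0 := by
      have : ((a - b) + (a - b)).coeff g = (a - b).coeff g + (a - b).coeff g := rfl
      rw [← this, hc]; rfl
    have hq : ((a-b).coeff g : ℚ) + ((a-b).coeff g : ℚ) = 0 := by exact_mod_cast congrArg (Subtype.val) h2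
    have : ((a-b).coeff g : ℚ) = 0 := by linarith
    exact_mod_cast this
  rw [sub_eq_zero] at hz
  exact hz

lemma intCast_ne_zero_Q (n : ℤ) (hn : ¬ (2 ∣ n)) : (n:ℚ) ≠ 0 := by
  intro h
  apply hn
  have : n = 0 := by exact_mod_cast h
  simp [this]

lemma odd_isUnit (n : ℤ) (hn : ¬ (2 ∣ n)) : IsUnit (n : Zloc) := by
  have hne := intCast_ne_zero_Q n hn
  have hq : ((n:ℚ)⁻¹) ∈ Zloc := by
    apply Subring.subset_closure
    exact ⟨n, hn, inv_mul_cancel₀ hne⟩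
  refine IsUnit.of_mul_eq_one ⟨_, hq⟩ ?_
  ext
  push_cast
  exact mul_inv_cancel₀ hne

lemma odd_isUnit_Rtwo (n : ℕ) (hn : ¬ (2 ∣ n)) : IsUnit ((n : ℕ) : Rtwo) := by
  have h1 : IsUnit ((n : ℤ) : Zloc) := odd_isUnit n (by exact_mod_cast hn)
  have h2 := h1.map (algebraMap Zloc Rtwo)
  have : (algebraMap Zloc Rtwo) ((n : ℤ) : Zloc) = ((n:ℕ) : Rtwo) := by push_cast; ring
  rwa [this] at h2

/-- every finite module over `Rtwo` is killed by a power of 2 -/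
lemma exists_two_pow_smul_eq_zero (M : Type*) [AddCommGroup M] [Module Rtwo M] [Finite M] :
    ∃ e : ℕ, ∀ m : M, (2^e : ℕ) • m = 0 := by
  set n := Nat.card M with hn
  have hn0 : n ≠ 0 := Nat.card_pos.ne'
  refine ⟨n.factorization 2, fun m => ?_⟩
  set q := ordCompl[2] n with hq
  have hfac : 2 ^ (n.factorization 2) * q = n := Nat.ordProj_mul_ordCompl_eq_self n 2
  have hqodd : ¬ (2 ∣ q) := Nat.not_dvd_ordCompl Nat.prime_two hn0
  have hkill : n • m = 0 := by
    rw [hn]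
    exact card_nsmul_eq_zero'
  have h1 : ((q : ℕ) : Rtwo) • ((2 ^ (n.factorization 2) : ℕ) • m) = 0 := by
    rw [Nat.cast_smul_eq_nsmul, ← mul_smul, mul_comm, hfac, hkill]
  obtain ⟨u, hu⟩ := odd_isUnit_Rtwo q hqodd
  rw [← hu] at h1
  have := congrArg (fun y => (u⁻¹ : Rtwoˣ) • y) h1
  simpa [← Units.smul_def] using this

lemma det_row_diag {n : Type*} [DecidableEq n] [Fintype n] {R : Type*} [CommRing R]
    (i₀ : n) (w d : n → R) :
    Matrix.det (Matrix.of fun i j => if i = i₀ then w j else (if i = j then d i else 0)) =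
      w i₀ * ∏ j ∈ Finset.univ.erase i₀, d j := by
  rw [Matrix.det_apply]
  rw [Finset.sum_eq_single (1 : Equiv.Perm n)]
  · simp only [Equiv.Perm.sign_one, one_smul, Equiv.Perm.one_apply, Matrix.of_apply]
    rw [← Finset.mul_prod_erase Finset.univ _ (Finset.mem_univ i₀)]
    simp only [if_pos rfl]
    congr 1
    apply Finset.prod_congr rfl
    intro j hj
    have hji : j ≠ i₀ := (Finset.mem_erase.mp hj).1
    simp [hji]
  · intro σ _ hσ
    have hex : ∃ i, σ i ≠ i₀ ∧ σ i ≠ i := by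
      by_contra hcon
      push_neg at hcon
      apply hσ
      have hfix : σ i₀ = i₀ := by
        by_contra h2
        exact h2 (hcon i₀ h2)
      ext i
      simp only [Equiv.Perm.one_apply]
      by_cases h : σ i = i₀
      · rw [← hfix] at h
        rw [σ.injective h, hfix]
      · exact hcon i h
    obtain ⟨i, h1, h2⟩ := hex
    have hz : (Matrix.of fun i j => if i = i₀ then w j else (if i = j then d i else 0)) (σ i) i
        = 0 := by simp [h1, h2]
    have : (∏ i : n, (Matrix.of fun i j => if i = i₀ then w j else (if i = j then d i else 0))
        (σ i) i) = 0 := Finset.prod_eq_zero (Finset.mem_univ i) hz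
    rw [this, smul_zero]
  · intro h
    exact absurd (Finset.mem_univ _) h

lemma zmod_two_torsion_val {n a : ℕ} (hn : n = 2^a) (x : ZMod n) (hx : x ≠ 0) (h2 : x + x = 0) :
    1 ≤ a ∧ x.val = 2^(a-1) := by
  subst hn
  have ha : 1 ≤ a := by
    by_contra h
    have ha0 : a = 0 := by omega
    subst ha0
    exact hx (by revert x hx h2; decide)
  refine ⟨ha, ?_⟩
  haveI : NeZero ((2:ℕ)^a) := ⟨by positivity⟩
  have hxv : ((x.val : ℕ) : ZMod (2^a)) = x := (ZMod.natCast_val x).trans (ZMod.cast_id _ x)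
  have hcast : ((2 * x.val : ℕ) : ZMod (2^a)) = 0 := by
    push_cast
    rw [hxv, two_mul, h2]
  have hdvd : (2^a : ℕ) ∣ 2 * x.val := (ZMod.natCast_eq_zero_iff _ _).mp hcast
  have hlt : x.val < 2^a := ZMod.val_lt x
  have hne : x.val ≠ 0 := fun h => hx (by rw [← hxv, h, Nat.cast_zero])
  obtain ⟨c, hc⟩ := hdvd
  have h2a : (2:ℕ)^a = 2 * 2^(a-1) := by
    conv_lhs => rw [show a = (a-1)+1 by omega]
    rw [pow_succ]
    ring
  have hval : x.val = 2^(a-1) * c := by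
    apply Nat.eq_of_mul_eq_mul_left (show 0 < 2 by norm_num)
    rw [hc, h2a]; ring
  have hlt' : x.val < 2 * 2^(a-1) := h2a ▸ hlt
  have hclt : c < 2 := by
    by_contra hcge
    push_neg at hcge
    have hp : 0 < (2:ℕ)^(a-1) := Nat.pow_pos two_pos
    have : 2 * 2^(a-1) ≤ x.val := by nlinarith
    omega
  interval_cases c
  · omega
  · omega
open DirectSum

lemma finite_two_group_structure (N : Type*) [AddCommGroup N] [Finite N]
    (htwo : ∀ y : N, ∃ k : ℕ, (2^k : ℕ) • y = 0) :
    ∃ (ι : Type) (_ : Fintype ι) (d : ι → ℕ) (a : ι → ℕ),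
      (∀ i, d i = 2 ^ a i) ∧ Nonempty (N ≃+ ⨁ i, ZMod (d i)) := by
  obtain ⟨ι, hfin, p, hp, e, ⟨φ⟩⟩ := AddCommGroup.equiv_directSum_zmod_of_finite N
  classical
  refine ⟨ι, hfin, fun i => p i ^ e i, fun i => if p i = 2 then e i else 0, fun i => ?_, ⟨φ⟩⟩
  by_cases h : p i = 2
  · simp [h]
  · simp only [h, if_false, pow_zero]
    -- show p i ^ e i = 1, i.e. e i = 0
    have he : e i = 0 := by
      by_contra hne
      set g : N := φ.symm (DirectSum.of (fun i => ZMod (p i ^ e i)) i 1) with hg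
      have hkill : (p i ^ e i) • g = 0 := by
        rw [hg, ← map_nsmul]
        have : (p i ^ e i) • (DirectSum.of (fun i => ZMod (p i ^ e i)) i 1)
            = DirectSum.of (fun i => ZMod (p i ^ e i)) i ((p i ^ e i) • 1) := by
          rw [map_nsmul]
        rw [this]
        have h10 : ((p i ^ e i) • (1 : ZMod (p i ^ e i))) = 0 := by
          rw [nsmul_eq_mul, mul_one, Nat.cast_pow, ← Nat.cast_pow, ZMod.natCast_self]
        rw [h10, map_zero, map_zero]
      obtain ⟨k, hk⟩ := htwo g
      have hd1 : addOrderOf g ∣ p i ^ e i := addOrderOf_dvd_of_nsmul_eq_zero hkill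
      have hd2 : addOrderOf g ∣ 2 ^ k := addOrderOf_dvd_of_nsmul_eq_zero hk
      have hcop : Nat.Coprime (p i ^ e i) (2 ^ k) :=
        Nat.Coprime.pow _ _ (((Nat.coprime_primes (hp i) Nat.prime_two).mpr h))
      have hord : addOrderOf g = 1 :=
        Nat.dvd_one.mp (hcop ▸ Nat.dvd_gcd hd1 hd2)
      have hg0 : g = 0 := AddMonoid.addOrderOf_eq_one_iff.mp hord
      have : DirectSum.of (fun i => ZMod (p i ^ e i)) i 1 = 0 := by
        rw [hg] at hg0
        have := congrArg φ hg0
        rwa [AddEquiv.apply_symm_apply, map_zero] at this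
      have h1 : (1 : ZMod (p i ^ e i)) = 0 := by
        have := DirectSum.of_injective (β := fun i => ZMod (p i ^ e i)) i
          (a₁ := 1) (a₂ := 0)
        apply this
        rw [map_zero]
        exact ‹DirectSum.of (fun i => ZMod (p i ^ e i)) i 1 = 0›
      haveI : Fact (1 < p i ^ e i) := ⟨one_lt_pow₀ (hp i).one_lt hne⟩
      exact one_ne_zero h1
    rw [he, pow_zero]

set_option maxHeartbeats 1000000 in
/-- Let `G = ⟨τ⟩` have order 2, `R₂ = ℤ_(2)[G]`, and `M` a finite
`R₂`-module such that `ker(1+τ)/im(1-τ)` on `M` has order 2.  Then the element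
`|M/(1-τ)M|·(1+τ)/2` of `R₂` (the unique `r` with `2r = |M/(1-τ)M|·(1+τ)`,
which exists since `|M/(1-τ)M|` is even) belongs to `Fit_{R₂}(M)`. -/
theorem half_card_coinvariants_mul_one_add_tau_mem_fittingIdeal
    (M : Type*) [AddCommGroup M] [Module Rtwo M] [Finite M]
    (hcoh : Nat.card {m : M // (1 + tau2) • m = 0} =
      2 * Nat.card (Set.range fun m : M => (1 - tau2) • m)) :
    ∀ r : Rtwo,
      2 * r = (Nat.card (M ⧸ LinearMap.range
          ((1 - tau2) • (LinearMap.id : M →ₗ[Rtwo] M))) : Rtwo) * (1 + tau2) →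
        r ∈ fittingIdeal Rtwo M := by
  classical
  intro r hr
  set T : Submodule Rtwo M := LinearMap.range ((1 - tau2) • (LinearMap.id : M →ₗ[Rtwo] M))
    with hTdef
  have hmemT : ∀ m : M, m ∈ T ↔ ∃ y : M, (1 - tau2) • y = m := by
    intro m
    constructor
    · rintro ⟨y, rfl⟩
      exact ⟨y, by simp⟩
    · rintro ⟨y, rfl⟩
      exact ⟨y, by simp⟩
  set K : Submodule Rtwo M := LinearMap.ker ((1 + tau2) • (LinearMap.id : M →ₗ[Rtwo] M))
    with hKdef
  have hmemK : ∀ m : M, m ∈ K ↔ (1 + tau2) • m = 0 := by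
    intro m
    rw [hKdef, LinearMap.mem_ker, LinearMap.smul_apply, LinearMap.id_apply]
  set AK : AddSubgroup M := K.toAddSubgroup with hAKdef
  set AT : AddSubgroup M := T.toAddSubgroup with hATdef
  have hmemAK : ∀ m : M, m ∈ AK ↔ (1 + tau2) • m = 0 := fun m => hmemK m
  have hmemAT : ∀ m : M, m ∈ AT ↔ m ∈ T := fun m => Iff.rfl
  have hTK : AT ≤ AK := by
    intro m hm
    obtain ⟨y, hy⟩ := (hmemT m).mp ((hmemAT m).mp hm)
    rw [hmemAK, ← hy, smul_smul, one_add_mul_one_sub, zero_smul]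
  -- cardinalities
  have hcK : Nat.card AK = Nat.card {m : M // (1 + tau2) • m = 0} :=
    Nat.card_congr (Equiv.subtypeEquivRight hmemAK)
  have hcT : Nat.card AT = Nat.card (Set.range fun m : M => (1 - tau2) • m) := by
    apply Nat.card_congr
    apply Equiv.setCongr
    ext m
    rw [SetLike.mem_coe, hmemAT m, hmemT m]
    exact Iff.rfl
  set T' : AddSubgroup AK := AT.addSubgroupOf AK with hT'def
  have hcT' : Nat.card T' = Nat.card AT :=
    Nat.card_congr (AddSubgroup.addSubgroupOfEquivOfLe hTK).toEquiv
  have hcard2 : Nat.card AK = Nat.card (AK ⧸ T') * Nat.card T' :=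
    AddSubgroup.card_eq_card_quotient_mul_card_addSubgroup T'
  have hQ2 : Nat.card (AK ⧸ T') = 2 := by
    have hTpos : 0 < Nat.card AT := Nat.card_pos
    have h1 : Nat.card (AK ⧸ T') * Nat.card AT = 2 * Nat.card AT := by
      rw [← hcT', ← hcard2, hcK, hcoh, ← hcT, hcT']
    exact Nat.eq_of_mul_eq_mul_right hTpos h1
  haveI : Nontrivial (AK ⧸ T') := Finite.one_lt_card_iff_nontrivial.mp (by rw [hQ2]; norm_num)
  obtain ⟨q0, hq0⟩ := exists_ne (0 : AK ⧸ T')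
  obtain ⟨sK, hsK⟩ := QuotientAddGroup.mk'_surjective T' q0
  set s : M := (sK : M) with hsdef
  have hsker : (1 + tau2) • s = 0 := (hmemAK s).mp sK.2
  have hsnotT : s ∉ T := by
    intro hmem
    apply hq0
    rw [← hsK]
    have : sK ∈ T' := by
      rw [hT'def, AddSubgroup.mem_addSubgroupOf]
      exact hmem
    rwa [QuotientAddGroup.mk'_apply, QuotientAddGroup.eq_zero_iff]
  have h2s : (2:ℕ) • s ∈ T := by
    have h20 : (2:ℕ) • q0 = 0 := by
      have h := card_nsmul_eq_zero' (G := AK ⧸ T') (x := q0)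
      rwa [hQ2] at h
    have hmk : QuotientAddGroup.mk' T' ((2:ℕ) • sK) = (0 : AK ⧸ T') := by
      rw [map_nsmul, hsK, h20]
    have hmem : (2:ℕ) • sK ∈ T' := by
      rwa [QuotientAddGroup.mk'_apply, QuotientAddGroup.eq_zero_iff] at hmk
    rw [hT'def, AddSubgroup.mem_addSubgroupOf] at hmem
    have hco : (((2:ℕ) • sK : AK) : M) = (2:ℕ) • s := rfl
    rwa [hco] at hmem
  -- the quotient module N = M ⧸ T
  haveI : Finite (M ⧸ T) := Quotient.finite _
  have htwoN : ∀ y : M ⧸ T, ∃ k : ℕ, (2^k : ℕ) • y = 0 := by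
    obtain ⟨e, he⟩ := exists_two_pow_smul_eq_zero (M ⧸ T)
    exact fun y => ⟨e, he y⟩
  obtain ⟨ι, hfinι, d, a, hd, ⟨φ⟩⟩ := finite_two_group_structure (M ⧸ T) htwoN
  haveI := hfinι
  haveI : ∀ i, NeZero (d i) := fun i => ⟨by rw [hd i]; positivity⟩
  set π : M →ₗ[Rtwo] M ⧸ T := T.mkQ with hπdef
  set xb : ι → M ⧸ T := fun i => φ.symm (DirectSum.of (fun i => ZMod (d i)) i 1) with hxbdef
  have hrep : ∀ y : M ⧸ T, y = ∑ j, (φ y j).val • xb j := by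
    intro y
    apply φ.injective
    rw [map_sum]
    have hterm : ∀ j, φ ((φ y j).val • xb j) = DirectSum.of (fun i => ZMod (d i)) j (φ y j) := by
      intro j
      rw [map_nsmul, hxbdef]
      simp only []
      rw [AddEquiv.apply_symm_apply, ← map_nsmul]
      congr 1
      rw [nsmul_eq_mul, mul_one, ZMod.natCast_val, ZMod.cast_id]
    rw [Finset.sum_congr rfl (fun j _ => hterm j)]
    exact (DirectSum.sum_univ_of _).symm
  -- lifts of the generators
  have hsurj := Submodule.Quotient.mk_surjective T
  choose x hx using fun i => hsurj (xb i)
  have hπx : ∀ i, π (x i) = xb i := by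
    intro i
    rw [hπdef, Submodule.mkQ_apply, hx]
  -- span
  set X : Submodule Rtwo M := Submodule.span Rtwo (Set.range x) with hXdef
  have hXsum : ∀ (v : ι → ℕ), (∑ j, v j • x j) ∈ X := by
    intro v
    apply Submodule.sum_mem
    intro j _
    rw [← Nat.cast_smul_eq_nsmul Rtwo]
    exact Submodule.smul_mem _ _ (Submodule.subset_span ⟨j, rfl⟩)
  have hπsum : ∀ (v : ι → ℕ), π (∑ j, v j • x j) = ∑ j, v j • xb j := by
    intro v
    rw [map_sum]
    exact Finset.sum_congr rfl (fun j _ => by rw [map_nsmul, hπx])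
  have hbase : ∀ m : M, ∃ ξ ∈ X, ∃ m' : M, m = ξ + (1 - tau2) • m' := by
    intro m
    refine ⟨∑ j, (φ (π m) j).val • x j, hXsum _, ?_⟩
    have hdiff : m - ∑ j, (φ (π m) j).val • x j ∈ T := by
      have : π (m - ∑ j, (φ (π m) j).val • x j) = 0 := by
        rw [map_sub, hπsum, ← hrep (π m), sub_self]
      rwa [hπdef, Submodule.mkQ_apply, Submodule.Quotient.mk_eq_zero] at this
    obtain ⟨m', hm'⟩ := (hmemT _).mp hdiff
    exact ⟨m', by rw [hm']; abel⟩
  have hstep : ∀ (k : ℕ) (m : M), ∃ ξ ∈ X, ∃ m' : M,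
      m = ξ + ((2^k : Rtwo) * (1 - tau2)) • m' := by
    intro k
    induction k with
    | zero =>
      intro m
      obtain ⟨ξ, hξ, m', rfl⟩ := hbase m
      exact ⟨ξ, hξ, m', by rw [pow_zero, one_mul]⟩
    | succ k ih =>
      intro m
      obtain ⟨ξ, hξ, m', rfl⟩ := ih m
      obtain ⟨ξ', hξ', m'', rfl⟩ := hbase m'
      refine ⟨ξ + ((2^k : Rtwo) * (1 - tau2)) • ξ',
        Submodule.add_mem _ hξ (Submodule.smul_mem _ _ hξ'), m'', ?_⟩
      rw [smul_add, ← add_assoc]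
      congr 1
      rw [smul_smul]
      congr 1
      calc (2^k * (1 - tau2)) * (1 - tau2) = 2^k * ((1 - tau2) * (1 - tau2)) := by ring
        _ = 2^k * (2 * (1 - tau2)) := by rw [one_sub_sq]
        _ = (2^(k+1) : Rtwo) * (1 - tau2) := by ring
  have hXtop : X = ⊤ := by
    rw [Submodule.eq_top_iff']
    intro m
    obtain ⟨e, he⟩ := exists_two_pow_smul_eq_zero M
    obtain ⟨ξ, hξ, m', hm⟩ := hstep e m
    have hzero : ((2^e : Rtwo) * (1 - tau2)) • m' = 0 := by
      rw [mul_comm, mul_smul]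
      have h2e : (2^e : Rtwo) • m' = 0 := by
        have hcast : ((2:Rtwo)^e) = ((2^e : ℕ) : Rtwo) := by push_cast; ring
        rw [hcast, Nat.cast_smul_eq_nsmul, he m']
      rw [h2e, smul_zero]
    rw [hm, hzero, add_zero]
    exact hξ
  -- relations for the diagonal rows
  have hxd : ∀ i, ∃ m' : M, (d i : ℕ) • x i = (1 - tau2) • m' := by
    intro i
    have hπ0 : π ((d i : ℕ) • x i) = 0 := by
      rw [map_nsmul, hπx, hxbdef]
      simp only []
      rw [← map_nsmul]
      have h1 : (d i : ℕ) • (DirectSum.of (fun i => ZMod (d i)) i 1)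
          = DirectSum.of (fun i => ZMod (d i)) i ((d i : ℕ) • (1 : ZMod (d i))) :=
        (map_nsmul _ _ _).symm
      have h2 : (d i : ℕ) • (1 : ZMod (d i)) = 0 := by
        rw [nsmul_eq_mul, mul_one, ZMod.natCast_self]
      rw [h1, h2, map_zero, map_zero]
    have hmem : (d i : ℕ) • x i ∈ T := by
      rwa [hπdef, Submodule.mkQ_apply, Submodule.Quotient.mk_eq_zero] at hπ0
    obtain ⟨y, hy⟩ := (hmemT _).mp hmem
    exact ⟨y, hy.symm⟩
  choose mdiag hmdiag using hxd
  have hcoef : ∀ m : M, ∃ c : ι → Rtwo, ∑ j, c j • x j = m := by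
    intro m
    have hm : m ∈ X := by rw [hXtop]; trivial
    rw [hXdef] at hm
    exact (Submodule.mem_span_range_iff_exists_fun Rtwo).mp hm
  choose C hC using fun i => hcoef (mdiag i)
  -- the distinguished element in the quotient
  set sb : M ⧸ T := π s with hsbdef
  have hsb0 : sb ≠ 0 := by
    rw [hsbdef, hπdef, Submodule.mkQ_apply]
    intro h
    exact hsnotT ((Submodule.Quotient.mk_eq_zero _).mp h)
  have hsb2 : sb + sb = 0 := by
    have : π ((2:ℕ) • s) = 0 := by
      rw [hπdef, Submodule.mkQ_apply, Submodule.Quotient.mk_eq_zero]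
      exact h2s
    rw [map_nsmul] at this
    rwa [two_nsmul] at this
  set w : ι → ℕ := fun j => (φ sb j).val with hwdef
  obtain ⟨i₀, hi₀⟩ : ∃ i, φ sb i ≠ 0 := by
    by_contra h
    push_neg at h
    apply hsb0
    apply φ.injective
    rw [map_zero]
    exact DFinsupp.ext h
  have htor : φ sb i₀ + φ sb i₀ = 0 := by
    have h := congrArg φ hsb2
    rw [map_add, map_zero] at h
    have := congrArg (fun z => z i₀) h
    simpa using this
  obtain ⟨ha1, hval⟩ := zmod_two_torsion_val (hd i₀) (φ sb i₀) hi₀ htor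
  have h2w : 2 * w i₀ = d i₀ := by
    have hwv : w i₀ = 2 ^ (a i₀ - 1) := hval
    rw [hwv, hd i₀, ← pow_succ']
    congr 1
    omega
  -- row i₀ relation
  have hrow0 : ∑ j, ((1 + tau2) * (w j : Rtwo)) • x j = 0 := by
    have hsum : π (∑ j, w j • x j) = sb := by
      rw [hπsum]
      exact (hrep sb).symm
    have hdiff : (∑ j, w j • x j) - s ∈ T := by
      have : π ((∑ j, w j • x j) - s) = 0 := by
        rw [map_sub, hsum, ← hsbdef, sub_self]
      rwa [hπdef, Submodule.mkQ_apply, Submodule.Quotient.mk_eq_zero] at this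
    obtain ⟨m₀, hm₀⟩ := (hmemT _).mp hdiff
    have hsplit : (∑ j, (w j : Rtwo) • x j) = s + (1 - tau2) • m₀ := by
      have : (∑ j, (w j : Rtwo) • x j) = ∑ j, w j • x j :=
        Finset.sum_congr rfl (fun j _ => Nat.cast_smul_eq_nsmul Rtwo _ _)
      rw [this, hm₀]
      abel
    have key : (1 + tau2) • (∑ j, (w j : Rtwo) • x j) = 0 := by
      rw [hsplit, smul_add, hsker, smul_smul, one_add_mul_one_sub, zero_smul, add_zero]
    calc ∑ j, ((1 + tau2) * (w j : Rtwo)) • x j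
        = (1 + tau2) • ∑ j, (w j : Rtwo) • x j := by
          rw [Finset.smul_sum]
          exact Finset.sum_congr rfl (fun j _ => by rw [smul_smul])
      _ = 0 := key
  -- the matrix
  set B : Matrix ι ι Rtwo := Matrix.of (fun i j =>
    if i = i₀ then (1 + tau2) * (w j : Rtwo)
    else (if i = j then ((d i : ℕ) : Rtwo) else 0) - (1 - tau2) * C i j) with hBdef
  have hBrel : ∀ i, ∑ j, B i j • x j = 0 := by
    intro i
    by_cases h : i = i₀
    · subst h
      have : ∀ j, B i j = (1 + tau2) * (w j : Rtwo) := by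
        intro j
        rw [hBdef, Matrix.of_apply, if_pos rfl]
      rw [Finset.sum_congr rfl (fun j _ => by rw [this j])]
      exact hrow0
    · have hBij : ∀ j, B i j = (if i = j then ((d i : ℕ) : Rtwo) else 0) - (1 - tau2) * C i j := by
        intro j
        rw [hBdef, Matrix.of_apply, if_neg h]
      have hsplit : ∑ j, B i j • x j
          = (∑ j, (if i = j then ((d i : ℕ) : Rtwo) else 0) • x j)
            - (1 - tau2) • (∑ j, C i j • x j) := by
        rw [Finset.smul_sum, ← Finset.sum_sub_distrib]
        apply Finset.sum_congr rfl
        intro j _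
        rw [hBij j, sub_smul, smul_smul]
      have hdiag : (∑ j, (if i = j then ((d i : ℕ) : Rtwo) else 0) • x j)
          = ((d i : ℕ) : Rtwo) • x i := by
        rw [Finset.sum_eq_single i]
        · rw [if_pos rfl]
        · intro j _ hj
          rw [if_neg (Ne.symm hj), zero_smul]
        · intro h'
          exact absurd (Finset.mem_univ _) h'
      rw [hsplit, hdiag, hC, Nat.cast_smul_eq_nsmul, hmdiag i, sub_self]
  -- determinant computation
  set Bb : Matrix ι ι Rtwo := Matrix.of (fun i j =>
    if i = i₀ then (w j : Rtwo)
    else (if i = j then ((d i : ℕ) : Rtwo) else 0) - (1 - tau2) * C i j) with hBbdef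
  set B0 : Matrix ι ι Rtwo := Matrix.of (fun i j =>
    if i = i₀ then (w j : Rtwo)
    else (if i = j then ((d i : ℕ) : Rtwo) else 0)) with hB0def
  have hdet1 : B.det = (1 + tau2) * Bb.det := by
    have hBup : B = Bb.updateRow i₀ ((1 + tau2) • fun j => (w j : Rtwo)) := by
      ext i j
      rw [Matrix.updateRow_apply]
      by_cases h : i = i₀
      · rw [if_pos h, hBdef, Matrix.of_apply, if_pos h, Pi.smul_apply, smul_eq_mul]
      · rw [if_neg h, hBdef, hBbdef, Matrix.of_apply, Matrix.of_apply, if_neg h, if_neg h]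
    rw [hBup, Matrix.det_updateRow_smul]
    congr 1
    have hrow : (fun j => ((w j : Rtwo))) = Bb i₀ := by
      funext j
      rw [hBbdef, Matrix.of_apply, if_pos rfl]
    rw [hrow, Matrix.updateRow_eq_self]
  have hdet2 : (1 + tau2) * Bb.det = (1 + tau2) * B0.det := by
    have hmk : (Ideal.Quotient.mk (Ideal.span {1 - tau2})) Bb.det
        = (Ideal.Quotient.mk (Ideal.span {1 - tau2})) B0.det := by
      rw [RingHom.map_det (Ideal.Quotient.mk _), RingHom.map_det (Ideal.Quotient.mk _), RingHom.mapMatrix_apply, RingHom.mapMatrix_apply]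
      congr 1
      ext i j
      rw [Matrix.map_apply, Matrix.map_apply, Ideal.Quotient.mk_eq_mk_iff_sub_mem]
      by_cases h : i = i₀
      · rw [hBbdef, hB0def, Matrix.of_apply, Matrix.of_apply, if_pos h, if_pos h, sub_self]
        exact Submodule.zero_mem _
      · rw [hBbdef, hB0def, Matrix.of_apply, Matrix.of_apply, if_neg h, if_neg h]
        have : ((if i = j then ((d i : ℕ) : Rtwo) else 0) - (1 - tau2) * C i j)
            - (if i = j then ((d i : ℕ) : Rtwo) else 0) = (-(C i j)) * (1 - tau2) := by ring
        rw [this]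
        exact Ideal.mem_span_singleton'.mpr ⟨-(C i j), rfl⟩
    rw [Ideal.Quotient.mk_eq_mk_iff_sub_mem] at hmk
    obtain ⟨z, hz⟩ := Ideal.mem_span_singleton'.mp hmk
    have hBbeq : Bb.det = B0.det + z * (1 - tau2) := by rw [hz]; ring
    rw [hBbeq, mul_add, show (1 + tau2) * (z * (1 - tau2))
      = z * ((1 + tau2) * (1 - tau2)) by ring, one_add_mul_one_sub, mul_zero, add_zero]
  have hdet3 : B0.det = (w i₀ : Rtwo) * ∏ j ∈ Finset.univ.erase i₀, ((d j : ℕ) : Rtwo) := by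
    rw [hB0def]
    exact det_row_diag i₀ _ _
  -- cardinality of the quotient
  have hcardN : Nat.card (M ⧸ T) = ∏ j, d j := by
    have e1 : (⨁ i, ZMod (d i)) ≃ (∀ i, ZMod (d i)) := DFinsupp.equivFunOnFintype
    rw [Nat.card_congr φ.toEquiv, Nat.card_congr e1, Nat.card_pi]
    exact Finset.prod_congr rfl (fun j _ => Nat.card_zmod _)
  -- final identification
  have hfinal : 2 * B.det = ((Nat.card (M ⧸ T) : ℕ) : Rtwo) * (1 + tau2) := by
    rw [hdet1, hdet2, hdet3, hcardN]
    have hnat : (∏ j, d j) = (2 * w i₀) * ∏ j ∈ Finset.univ.erase i₀, d j := by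
      rw [h2w]
      exact (Finset.mul_prod_erase Finset.univ d (Finset.mem_univ i₀)).symm
    rw [hnat]
    push_cast
    ring
  have hrB : r = B.det := by
    apply two_regular
    rw [hr, hfinal]
  -- membership in the Fitting ideal
  set n : ℕ := Fintype.card ι with hndef
  set e : Fin n ≃ ι := (Fintype.equivFin ι).symm with hedef
  set x' : Fin n → M := x ∘ e with hx'def
  set B' : Matrix (Fin n) (Fin n) Rtwo := B.submatrix e e with hB'def
  have hspan' : Submodule.span Rtwo (Set.range x') = ⊤ := by
    rw [hx'def, Function.Surjective.range_comp e.surjective, ← hXdef, hXtop]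
  have hrel' : ∀ i, ∑ j, B' i j • x' j = 0 := by
    intro i
    have : ∑ j : Fin n, B (e i) (e j) • x (e j) = ∑ j : ι, B (e i) j • x j :=
      Fintype.sum_equiv e _ _ (fun j => rfl)
    rw [hB'def, hx'def]
    simpa [Matrix.submatrix_apply] using this.trans (hBrel (e i))
  have hdet' : r = B'.det := by
    rw [hB'def, Matrix.det_submatrix_equiv_self, hrB]
  have hle : Ideal.span {dd : Rtwo | ∃ Bm : Matrix (Fin n) (Fin n) Rtwo,
      (∀ i, ∑ j, Bm i j • x' j = 0) ∧ dd = Bm.det} ≤ fittingIdeal Rtwo M := by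
    rw [fittingIdeal]
    exact le_iSup_of_le n (le_iSup_of_le x' (le_iSup_of_le hspan' le_rfl))
  exact hle (Ideal.subset_span ⟨B', hrel', hdet'⟩)
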